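/- Let n > 2k ≥ 6 and let F be an intersecting family of k-element subsets of [n] with diversity γ(F) ≤ C(n-4, k-3). Then Δ(F) + ((n-k-2)/(k-2))·γ(F) ≤ C(n-1, k-1). -/

import Mathlib

open Finset FinsetFamily

-- local LYM relative to a set S
lemma myLYM {α : Type*} [DecidableEq α] (𝒜 : Finset (Finset α)) (S : Finset α) (r : ℕ)
    (h : ∀ A ∈ 𝒜, A.card = r + 1 ∧ A ⊆ S) :
    𝒜.card * (r + 1) ≤ (∂ 𝒜).card * (S.card - r) := by
  classical
  have hD : (𝒜.sigma fun A => A).card = 𝒜.card * (r + 1) := by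
    rw [card_sigma]
    rw [Finset.sum_congr rfl (fun A hA => (h A hA).1)]
    simp [mul_comm]
  have hT : ((∂ 𝒜).sigma fun B => S \ B).card = (∂ 𝒜).card * (S.card - r) := by
    rw [card_sigma]
    have : ∀ B ∈ ∂ 𝒜, (S \ B).card = S.card - r := by
      intro B hB
      obtain ⟨A, hA, a, ha, rfl⟩ := mem_shadow_iff.1 hB
      have h1 := (h A hA).1
      have h2 := (h A hA).2
      rw [card_sdiff_of_subset ((erase_subset a A).trans h2), card_erase_of_mem ha, h1]; simp
    rw [Finset.sum_congr rfl this, Finset.sum_const, smul_eq_mul]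
  rw [← hD, ← hT]
  apply card_le_card_of_injOn (fun p => ⟨p.1.erase p.2, p.2⟩)
  · rintro ⟨A, a⟩ hp
    rw [mem_coe, mem_sigma] at hp ⊢
    obtain ⟨hA, ha⟩ := hp
    refine ⟨mem_shadow_iff.2 ⟨A, hA, a, ha, rfl⟩, ?_⟩
    rw [mem_sdiff]
    exact ⟨(h A hA).2 ha, notMem_erase _ _⟩
  · rintro ⟨A, a⟩ hp ⟨B, b⟩ hq hfe
    rw [coe_sigma] at hp hq
    simp only [Set.mem_sigma_iff, mem_coe] at hp hq
    simp only [Sigma.mk.inj_iff, heq_eq_eq] at hfe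
    obtain ⟨h1, rfl⟩ := hfe
    have : A = B := by
      rw [← insert_erase hp.2, ← insert_erase hq.2, h1]
    simp [this]

lemma myLYM_step {α : Type*} [DecidableEq α] (𝒜 : Finset (Finset α)) (S : Finset α) (r : ℕ)
    (h : ∀ A ∈ 𝒜, A.card = r + 1 ∧ A ⊆ S) :
    𝒜.card * S.card.choose r ≤ (∂ 𝒜).card * S.card.choose (r + 1) := by
  have key := Nat.choose_succ_right_eq S.card r
  have h1 := myLYM 𝒜 S r h
  have h2 : 𝒜.card * S.card.choose r * (r + 1) ≤ (∂ 𝒜).card * S.card.choose (r + 1) * (r + 1) := by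
    calc 𝒜.card * S.card.choose r * (r + 1) = 𝒜.card * (r + 1) * S.card.choose r := by ring
    _ ≤ (∂ 𝒜).card * (S.card - r) * S.card.choose r := by
        exact Nat.mul_le_mul_right _ h1
    _ = (∂ 𝒜).card * (S.card.choose (r+1) * (r+1)) := by rw [key]; ring
    _ = (∂ 𝒜).card * S.card.choose (r + 1) * (r + 1) := by ring
  exact Nat.le_of_mul_le_mul_right h2 (Nat.succ_pos r)

lemma myLYM_iter {α : Type*} [DecidableEq α] (S : Finset α) (v : ℕ) :
    ∀ (t : ℕ) (𝒜 : Finset (Finset α)), (∀ A ∈ 𝒜, A.card = v + t ∧ A ⊆ S) →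
    𝒜.card * S.card.choose v ≤ (∂^[t] 𝒜).card * S.card.choose (v + t) := by
  intro t
  induction t with
  | zero => intro 𝒜 _; simp
  | succ t ih =>
    intro 𝒜 h𝒜
    rcases eq_or_ne 𝒜 ∅ with rfl | hne
    · simp
    have hstep : 𝒜.card * S.card.choose (v + t) ≤ (∂ 𝒜).card * S.card.choose (v + t + 1) :=
      myLYM_step 𝒜 S (v + t) (by intro A hA; exact ⟨by rw [(h𝒜 A hA).1]; omega, (h𝒜 A hA).2⟩)
    have hsh : ∀ B ∈ ∂ 𝒜, B.card = v + t ∧ B ⊆ S := by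
      intro B hB
      obtain ⟨A, hA, a, ha, rfl⟩ := mem_shadow_iff.1 hB
      refine ⟨?_, (erase_subset a A).trans (h𝒜 A hA).2⟩
      rw [card_erase_of_mem ha, (h𝒜 A hA).1]; omega
    have hih := ih (∂ 𝒜) hsh
    have hvtb : v + t ≤ S.card := by
      obtain ⟨A, hA⟩ := Finset.nonempty_iff_ne_empty.2 hne
      have h1 := card_le_card (h𝒜 A hA).2
      have h2 := (h𝒜 A hA).1
      omega
    have hpos : 0 < S.card.choose (v + t) := Nat.choose_pos hvtb
    have hfin : 𝒜.card * S.card.choose v * S.card.choose (v + t) ≤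
        (∂^[t+1] 𝒜).card * S.card.choose (v + (t+1)) * S.card.choose (v + t) := by
      calc 𝒜.card * S.card.choose v * S.card.choose (v + t)
          = 𝒜.card * S.card.choose (v + t) * S.card.choose v := by ring
        _ ≤ (∂ 𝒜).card * S.card.choose (v + t + 1) * S.card.choose v := by
            exact Nat.mul_le_mul_right _ hstep
        _ = (∂ 𝒜).card * S.card.choose v * S.card.choose (v + t + 1) := by ring
        _ ≤ (∂^[t] (∂ 𝒜)).card * S.card.choose (v + t) * S.card.choose (v + t + 1) := by
            exact Nat.mul_le_mul_right _ hih
        _ = (∂^[t+1] 𝒜).card * S.card.choose (v + (t+1)) * S.card.choose (v + t) := by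
            rw [Function.iterate_succ_apply]; ring_nf
    exact Nat.le_of_mul_le_mul_right hfin hpos

lemma exists_lowerSet {β : Type*} [LinearOrder β] (s : Finset β) :
    ∀ γ : ℕ, γ ≤ s.card → ∃ T ⊆ s, T.card = γ ∧ ∀ x ∈ T, ∀ y ∈ s, y < x → y ∈ T := by
  intro γ
  induction γ with
  | zero => intro _; exact ⟨∅, empty_subset s, rfl, by simp⟩
  | succ γ ih =>
    intro hγ
    obtain ⟨T, hTs, hTc, hTl⟩ := ih (by omega)
    have hne : (s \ T).Nonempty := by
      rw [← Finset.card_pos, card_sdiff_of_subset hTs]; omega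
    set x := (s \ T).min' hne with hx
    have hxmem := (s \ T).min'_mem hne
    rw [mem_sdiff] at hxmem
    refine ⟨insert x T, ?_, ?_, ?_⟩
    · exact insert_subset hxmem.1 hTs
    · rw [card_insert_of_notMem hxmem.2, hTc]
    · intro z hz y hy hyz
      rcases mem_insert.1 hz with rfl | hzT
      · by_cases hyT : y ∈ T
        · exact mem_insert_of_mem hyT
        · exact absurd ((s \ T).min'_le y (mem_sdiff.2 ⟨hy, hyT⟩)) (not_le.2 hyz)
      · exact mem_insert_of_mem (hTl z hzT y hy hyz)


set_option maxHeartbeats 2000000 in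
/-- Corollary 9: let `n > 2k ≥ 6` and let `F` be an intersecting family of
`k`-subsets of `[n]` with diversity `γ(F) ≤ C(n-4, k-3)`. Then
`Δ(F) + ((n-k-2)/(k-2))·γ(F) ≤ C(n-1, k-1)`. -/
theorem weighted_diversity_bound (n k : ℕ) (hk : 3 ≤ k) (hn : 2 * k < n)
    (F : Finset (Finset (Fin n)))
    (hcard : ∀ A ∈ F, A.card = k)
    (hint : ∀ A ∈ F, ∀ B ∈ F, (A ∩ B).Nonempty)
    (hdiv : F.card - Finset.univ.sup (fun i : Fin n => (F.filter (fun A => i ∈ A)).card) ≤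
      (n - 4).choose (k - 3)) :
    ((Finset.univ.sup (fun i : Fin n => (F.filter (fun A => i ∈ A)).card) : ℕ) : ℝ) +
      ((n : ℝ) - (k : ℝ) - 2) / ((k : ℝ) - 2) *
        ((F.card - Finset.univ.sup (fun i : Fin n => (F.filter (fun A => i ∈ A)).card) : ℕ) : ℝ)
      ≤ ((n - 1).choose (k - 1) : ℝ) := by
  classical
  obtain ⟨j, rfl⟩ : ∃ j, k = j + 3 := ⟨k - 3, by omega⟩
  obtain ⟨q, rfl⟩ : ∃ q, n = 2 * j + 7 + q := ⟨n - (2 * j + 7), by omega⟩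
  have hne : (univ : Finset (Fin (2 * j + 7 + q))).Nonempty := ⟨⟨0, by omega⟩, mem_univ _⟩
  obtain ⟨i, -, hΔ⟩ := exists_mem_eq_sup univ hne (fun i : Fin (2 * j + 7 + q) => (F.filter (fun A => i ∈ A)).card)
  rw [hΔ] at hdiv ⊢
  set Δ := (F.filter (fun A => i ∈ A)).card with hΔdef
  set G := F.filter (fun A => i ∉ A) with hG
  have hΔG : Δ + G.card = F.card := by
    simpa using card_filter_add_card_filter_not (s := F) (p := fun A => i ∈ A)
  set γ := G.card with hγ
  have hFγ : F.card - Δ = γ := by omega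
  rw [hFγ] at hdiv ⊢
  have hγle : γ ≤ (2 * j + 3 + q).choose j := by
    have : 2 * j + 7 + q - 4 = 2 * j + 3 + q := by omega
    have h2 : j + 3 - 3 = j := by omega
    rwa [this, h2] at hdiv
  -- the ground minus i
  set E := (univ : Finset (Fin (2 * j + 7 + q))).erase i with hE
  have hEcard : E.card = 2 * j + 6 + q := by
    rw [hE, card_erase_of_mem (mem_univ i), card_univ, Fintype.card_fin]
    omega
  set U := powersetCard (j + 2) E with hU
  have hUcard : U.card = (2 * j + 6 + q).choose (j + 2) := by
    rw [hU, card_powersetCard, hEcard]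
  set D := U.filter (fun C => ∃ B ∈ G, Disjoint B C) with hD
  -- star bound
  have hUD : Δ + D.card ≤ U.card := by
    have himg : (F.filter (fun A => i ∈ A)).image (fun A => A.erase i) ⊆ U \ D := by
      intro C hC
      simp only [mem_image, mem_filter] at hC
      obtain ⟨A, ⟨hAF, hiA⟩, rfl⟩ := hC
      have hCU : A.erase i ∈ U := by
        rw [hU, mem_powersetCard]
        refine ⟨erase_subset_erase i (subset_univ A), ?_⟩
        rw [card_erase_of_mem hiA, hcard A hAF]
        omega
      rw [mem_sdiff]
      refine ⟨hCU, ?_⟩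
      rw [hD, mem_filter]
      rintro ⟨-, B, hBG, hdisj⟩
      rw [hG, mem_filter] at hBG
      obtain ⟨x, hx⟩ := hint A hAF B hBG.1
      rw [mem_inter] at hx
      have hxi : x ≠ i := fun h => hBG.2 (h ▸ hx.2)
      exact (disjoint_right.1 hdisj (mem_erase.2 ⟨hxi, hx.1⟩)) hx.2
    have hinj : Set.InjOn (fun A : Finset (Fin (2 * j + 7 + q)) => A.erase i)
        ↑(F.filter (fun A => i ∈ A)) := by
      intro A hA B hB hAB
      simp only [coe_filter, Set.mem_setOf_eq] at hA hB
      rw [← insert_erase hA.2, ← insert_erase hB.2]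
      simp only at hAB
      rw [hAB]
    have h1 : Δ ≤ (U \ D).card := by
      rw [hΔdef, ← card_image_of_injOn hinj]
      exact card_le_card himg
    have h2 : D ⊆ U := filter_subset _ _
    have h3 := card_le_card h2
    rw [card_sdiff_of_subset h2] at h1
    omega
  -- complements family
  set 𝒜 := G.image (fun B => E \ B) with h𝒜
  have h𝒜card : 𝒜.card = γ := by
    rw [h𝒜, card_image_of_injOn]
    intro A hA B hB hAB
    simp only [coe_filter, Set.mem_setOf_eq, hG] at hA hB
    have hAE : A ⊆ E := fun x hx => mem_erase.2 ⟨fun h => hA.2 (h ▸ hx), mem_univ x⟩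
    have hBE : B ⊆ E := fun x hx => mem_erase.2 ⟨fun h => hB.2 (h ▸ hx), mem_univ x⟩
    simp only at hAB
    have := congrArg (fun X => E \ X) hAB
    simpa [sdiff_sdiff_right_self, inf_eq_inter, (inter_eq_right).2 hAE,
      (inter_eq_right).2 hBE] using this
  have h𝒜sized : ∀ A ∈ 𝒜, A.card = j + 3 + q := by
    intro A hA
    rw [h𝒜, mem_image] at hA
    obtain ⟨B, hBG, rfl⟩ := hA
    rw [hG, mem_filter] at hBG
    have hBE : B ⊆ E := fun x hx => mem_erase.2 ⟨fun h => hBG.2 (h ▸ hx), mem_univ x⟩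
    rw [card_sdiff_of_subset hBE, hEcard, hcard B hBG.1]
    omega
  -- iterated shadow of complements sits inside D
  have hsub : ∂^[q + 1] 𝒜 ⊆ D := by
    intro C hC
    rw [mem_shadow_iterate_iff_exists_sdiff] at hC
    obtain ⟨A, hA𝒜, hCA, hcard'⟩ := hC
    rw [h𝒜, mem_image] at hA𝒜
    obtain ⟨B, hBG, rfl⟩ := hA𝒜
    have hBE : B ⊆ E := by
      rw [hG, mem_filter] at hBG
      exact fun x hx => mem_erase.2 ⟨fun h => hBG.2 (h ▸ hx), mem_univ x⟩
    have hAcard : (E \ B).card = j + 3 + q := h𝒜sized _ (mem_image_of_mem _ hBG)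
    have hCcard : C.card = j + 2 := by
      have := card_sdiff_add_card_eq_card hCA
      omega
    rw [hD, mem_filter]
    refine ⟨?_, B, hBG, ?_⟩
    · rw [hU, mem_powersetCard]
      exact ⟨hCA.trans (sdiff_subset), hCcard⟩
    · rw [disjoint_right]
      intro x hxC
      exact (mem_sdiff.1 (hCA hxC)).2
  -- initial segment construction
  set S : Finset (Fin (2 * j + 7 + q)) := attachFin (range (2 * j + 3 + q))
    (fun m hm => by rw [mem_range] at hm; omega) with hS
  have hScard : S.card = 2 * j + 3 + q := by rw [hS, card_attachFin, card_range]
  have hmemS : ∀ x : Fin (2 * j + 7 + q), x ∈ S ↔ (x : ℕ) < 2 * j + 3 + q := by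
    intro x; rw [hS, mem_attachFin, mem_range]
  set P := powersetCard (j + 3 + q) S with hP
  have hPcard : P.card = (2 * j + 3 + q).choose (j + 3 + q) := by
    rw [hP, card_powersetCard, hScard]
  have hsymm : (2 * j + 3 + q).choose (j + 3 + q) = (2 * j + 3 + q).choose j := by
    rw [← Nat.choose_symm (by omega : j + 3 + q ≤ 2 * j + 3 + q)]
    congr 1
    omega
  have hγP : γ ≤ P.card := by rw [hPcard, hsymm]; exact hγle
  have hPimgcard : (P.image toColex).card = P.card :=
    card_image_of_injective _ (fun A B h => by simpa using h)
  obtain ⟨T, hTP, hTcard, hTlow⟩ := exists_lowerSet (P.image toColex) γ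
    (by rw [hPimgcard]; exact hγP)
  set I := T.image ofColex with hI
  have hImem : ∀ A : Finset (Fin (2 * j + 7 + q)), A ∈ I ↔ toColex A ∈ T := by
    intro A
    rw [hI, mem_image]
    constructor
    · rintro ⟨c, hc, rfl⟩; simpa using hc
    · intro h; exact ⟨toColex A, h, rfl⟩
  have hIcard : I.card = γ := by
    rw [hI, card_image_of_injective _ ofColex.injective, hTcard]
  have hIP : I ⊆ P := by
    intro A hA
    rw [hImem] at hA
    obtain ⟨A', hA'P, hA'⟩ := mem_image.1 (hTP hA)
    have : A' = A := by simpa using hA'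
    exact this ▸ hA'P
  have hIS : ∀ A ∈ I, A.card = (j + 2) + (q + 1) ∧ A ⊆ S := by
    intro A hA
    have := mem_powersetCard.1 (hIP hA)
    have h2 := this.2
    exact ⟨by omega, this.1⟩
  have hInit : Finset.Colex.IsInitSeg I (j + 3 + q) := by
    refine ⟨?_, ?_⟩
    · intro A hA
      exact (mem_powersetCard.1 (hIP (mem_coe.1 hA))).2
    · rintro A B hA ⟨hlt, hBcard⟩
      have hAS : ∀ x ∈ A, x < (⟨2 * j + 3 + q, by omega⟩ : Fin (2 * j + 7 + q)) := by
        intro x hx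
        have hx2 := (mem_powersetCard.1 (hIP hA)).1 hx
        rw [hmemS] at hx2
        rwa [Fin.lt_def]
      have hBS : B ⊆ S := by
        intro x hx
        have hx2 := Finset.Colex.forall_lt_mono hlt.le hAS x hx
        rw [Fin.lt_def] at hx2
        rw [hmemS]
        exact hx2
      have hBP : B ∈ P := mem_powersetCard.2 ⟨hBS, hBcard⟩
      rw [hImem]
      exact hTlow _ ((hImem A).1 hA) _ (mem_image_of_mem _ hBP) hlt
  have hkk : (∂^[q+1] I).card ≤ (∂^[q+1] 𝒜).card := by
    have h := Finset.iterated_kk (k := q+1) (𝒜 := 𝒜) (𝒞 := I) (r := j + 3 + q)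
      (fun A hA => h𝒜sized A (mem_coe.1 hA)) (by rw [hIcard, h𝒜card]) hInit
    convert h using 4 <;> first | rfl | exact Subsingleton.elim _ _
  have hlym := myLYM_iter S (j + 2) (q + 1) I hIS
  rw [hIcard, hScard, show (j + 2) + (q + 1) = j + 3 + q by omega, hsymm] at hlym
  have hDge : (∂^[q+1] 𝒜).card ≤ D.card := card_le_card hsub
  have hchain : γ * (2*j+3+q).choose (j+2) ≤ D.card * (2*j+3+q).choose j := by
    calc γ * (2*j+3+q).choose (j+2) ≤ (∂^[q+1] I).card * (2*j+3+q).choose j := hlym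
      _ ≤ D.card * (2*j+3+q).choose j := Nat.mul_le_mul_right _ (hkk.trans hDge)
  have h1 := Nat.choose_succ_right_eq (2*j+3+q) j
  have h2 := Nat.choose_succ_right_eq (2*j+3+q) (j+1)
  rw [show 2*j+3+q - j = j+3+q by omega] at h1
  rw [show 2*j+3+q - (j+1) = j+2+q by omega, show j+1+1 = j+2 by omega] at h2
  have hbin : (j+2+q) * (2*j+3+q).choose j ≤ (j+1) * (2*j+3+q).choose (j+2) := by
    have key : (j+1) * (2*j+3+q).choose (j+2) * ((j+1)*(j+2))
        = (j+2+q) * (2*j+3+q).choose j * ((j+1)*(j+3+q)) := by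
      calc (j+1) * (2*j+3+q).choose (j+2) * ((j+1)*(j+2))
          = (j+1)*(j+1)*((2*j+3+q).choose (j+2)*(j+2)) := by ring
        _ = (j+1)*(j+1)*((2*j+3+q).choose (j+1)*(j+2+q)) := by rw [h2]
        _ = (j+2+q)*(j+1)*((2*j+3+q).choose (j+1)*(j+1)) := by ring
        _ = (j+2+q)*(j+1)*((2*j+3+q).choose j*(j+3+q)) := by rw [h1]
        _ = (j+2+q) * (2*j+3+q).choose j * ((j+1)*(j+3+q)) := by ring
    have hmul : (j+2+q) * (2*j+3+q).choose j * ((j+1)*(j+2)) ≤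
        (j+1) * (2*j+3+q).choose (j+2) * ((j+1)*(j+2)) := by
      rw [key]
      exact Nat.mul_le_mul_left _ (Nat.mul_le_mul_left _ (by omega))
    exact Nat.le_of_mul_le_mul_right hmul (by positivity)
  have hDγ : (j+2+q) * γ ≤ (j+1) * D.card := by
    have hpos : 0 < (2*j+3+q).choose (j+2) := Nat.choose_pos (by omega)
    have hmm : (j+2+q) * γ * (2*j+3+q).choose (j+2) ≤
        (j+1) * D.card * (2*j+3+q).choose (j+2) := by
      calc (j+2+q) * γ * (2*j+3+q).choose (j+2)
          = (j+2+q) * (γ * (2*j+3+q).choose (j+2)) := by ring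
        _ ≤ (j+2+q) * (D.card * (2*j+3+q).choose j) := Nat.mul_le_mul_left _ hchain
        _ = D.card * ((j+2+q) * (2*j+3+q).choose j) := by ring
        _ ≤ D.card * ((j+1) * (2*j+3+q).choose (j+2)) := Nat.mul_le_mul_left _ hbin
        _ = (j+1) * D.card * (2*j+3+q).choose (j+2) := by ring
    exact Nat.le_of_mul_le_mul_right hmm hpos
  have hnat : Δ + D.card ≤ (2*j+6+q).choose (j+2) := by rw [← hUcard]; exact hUD
  rw [show 2*j+7+q-1 = 2*j+6+q by omega, show j+3-1 = j+2 by omega]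
  have hγD : ((j:ℝ)+2+q) * γ ≤ ((j:ℝ)+1) * D.card := by exact_mod_cast hDγ
  have hΔDr : (Δ:ℝ) + D.card ≤ ((2*j+6+q).choose (j+2) : ℝ) := by exact_mod_cast hnat
  have hfrle : ((2*j+7+q : ℕ) - ((j:ℝ)+3) - 2)/(((j:ℝ)+3) - 2) * (γ:ℝ) ≤ (D.card : ℝ) := by
    rw [div_mul_eq_mul_div, div_le_iff₀ (by push_cast; linarith)]
    push_cast
    nlinarith [hγD]
  push_cast at hfrle ⊢
  linarith
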